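/- Initial-condition independence of limsup-boundedness for the deterministic Riccati recursion: for any deterministic binary sequence z and any two positive semidefinite initial matrices Σ₁ and Σ₂, limsup_{k→∞} Tr(P_k^{Σ₁}) < ∞ if and only if limsup_{k→∞} Tr(P_k^{Σ₂}) < ∞. (Equivalently: if limsup_{k→∞} Tr(P_k) = ∞ for some positive semidefinite initial condition then it equals ∞ for all, and if limsup_{k→∞} Tr(P_k) < ∞ for some positive semidefinite initial condition then it is finite for all.) -/

import Mathlib

open Filter Matrix

noncomputable section

/-- The operator `h(X) = A X Aᵀ + Q`. -/
def hOp {n : ℕ} (A Q : Matrix (Fin n) (Fin n) ℝ) (X : Matrix (Fin n) (Fin n) ℝ) :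
    Matrix (Fin n) (Fin n) ℝ :=
  A * X * Aᵀ + Q

/-- The operator `g(X) = A X Aᵀ + Q − A X Cᵀ (C X Cᵀ + R)⁻¹ C X Aᵀ`. -/
def gOp {n m : ℕ} (A Q : Matrix (Fin n) (Fin n) ℝ) (C : Matrix (Fin m) (Fin n) ℝ)
    (R : Matrix (Fin m) (Fin m) ℝ) (X : Matrix (Fin n) (Fin n) ℝ) :
    Matrix (Fin n) (Fin n) ℝ :=
  A * X * Aᵀ + Q - A * X * Cᵀ * (C * X * Cᵀ + R)⁻¹ * (C * X * Aᵀ)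

/-- The stacked observability matrix `[C; CA; …; CA^(k−1)]`. -/
def obsMat {n m : ℕ} (C : Matrix (Fin m) (Fin n) ℝ) (A : Matrix (Fin n) (Fin n) ℝ) (k : ℕ) :
    Matrix (Fin k × Fin m) (Fin n) ℝ :=
  fun p j => (C * A ^ (p.1 : ℕ)) p.2 j

/-- The controllability matrix `[S, AS, …, A^(n−1) S]`. -/
def ctrbMat {n : ℕ} (A : Matrix (Fin n) (Fin n) ℝ) (S : Matrix (Fin n) (Fin n) ℝ) :
    Matrix (Fin n) (Fin n × Fin n) ℝ :=
  fun i p => (A ^ (p.1 : ℕ) * S) i p.2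

/-- The deterministic covariance recursion driven by the binary sequence `z`:
`P 0 = S`, `P (k+1) = g (P k)` if `z k` holds, `P (k+1) = h (P k)` otherwise. -/
def detFilt {n m : ℕ} (A Q : Matrix (Fin n) (Fin n) ℝ) (C : Matrix (Fin m) (Fin n) ℝ)
    (R : Matrix (Fin m) (Fin m) ℝ) (z : ℕ → Bool) (S : Matrix (Fin n) (Fin n) ℝ) :
    ℕ → Matrix (Fin n) (Fin n) ℝ
  | 0 => S
  | k + 1 =>
      if z k then gOp A Q C R (detFilt A Q C R z S k)
      else hOp A Q (detFilt A Q C R z S k)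

namespace RiccatiAux


/-- Squared Frobenius norm. -/
def sqn {p q : ℕ} (X : Matrix (Fin p) (Fin q) ℝ) : ℝ := ∑ i, ∑ j, (X i j) ^ 2

lemma sqn_nonneg {p q : ℕ} (X : Matrix (Fin p) (Fin q) ℝ) : 0 ≤ sqn X := by
  apply Finset.sum_nonneg; intro i _; apply Finset.sum_nonneg; intro j _; positivity

lemma sqn_eq_trace {p q : ℕ} (X : Matrix (Fin p) (Fin q) ℝ) : sqn X = (X * Xᵀ).trace := by
  simp [sqn, Matrix.trace, Matrix.mul_apply, Matrix.diag, sq]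

lemma sqn_mul_le {p q r : ℕ} (X : Matrix (Fin p) (Fin q) ℝ) (Y : Matrix (Fin q) (Fin r) ℝ) :
    sqn (X * Y) ≤ sqn X * sqn Y := by
  have h : ∀ i k, ((X * Y) i k) ^ 2 ≤ (∑ j, (X i j) ^ 2) * (∑ j, (Y j k) ^ 2) := by
    intro i k
    simpa [Matrix.mul_apply] using
      Finset.sum_mul_sq_le_sq_mul_sq Finset.univ (fun j => X i j) (fun j => Y j k)
  calc sqn (X * Y) = ∑ i, ∑ k, ((X * Y) i k) ^ 2 := rfl
    _ ≤ ∑ i, ∑ k, (∑ j, (X i j) ^ 2) * (∑ j, (Y j k) ^ 2) := by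
        apply Finset.sum_le_sum; intro i _; apply Finset.sum_le_sum; intro k _; exact h i k
    _ = (∑ i, ∑ j, (X i j) ^ 2) * (∑ k, ∑ j, (Y j k) ^ 2) := by
        rw [Finset.sum_mul_sum]
    _ = sqn X * sqn Y := by rw [sqn, sqn, Finset.sum_comm (s := Finset.univ) (t := Finset.univ)
          (f := fun j k => (Y j k) ^ 2)]

lemma sqn_sum_le {p q : ℕ} {ι : Type*} (s : Finset ι) (Z : ι → Matrix (Fin p) (Fin q) ℝ) :
    sqn (∑ t ∈ s, Z t) ≤ s.card * ∑ t ∈ s, sqn (Z t) := by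
  have h : ∀ i j, (∑ t ∈ s, Z t i j) ^ 2 ≤ s.card * ∑ t ∈ s, (Z t i j) ^ 2 := by
    intro i j
    exact sq_sum_le_card_mul_sum_sq (s := s) (f := fun t => Z t i j)
  calc sqn (∑ t ∈ s, Z t) = ∑ i, ∑ j, (∑ t ∈ s, Z t i j) ^ 2 := by
        simp [sqn, Matrix.sum_apply]
    _ ≤ ∑ i, ∑ j, ((s.card : ℝ) * ∑ t ∈ s, (Z t i j) ^ 2) := by
        apply Finset.sum_le_sum; intro i _; apply Finset.sum_le_sum; intro j _; exact h i j
    _ = s.card * ∑ i, ∑ j, ∑ t ∈ s, (Z t i j) ^ 2 := by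
        simp only [← Finset.mul_sum]
    _ = s.card * ∑ t ∈ s, sqn (Z t) := by
        congr 1
        calc ∑ i, ∑ j, ∑ t ∈ s, (Z t i j) ^ 2
            = ∑ i, ∑ t ∈ s, ∑ j, (Z t i j) ^ 2 :=
              Finset.sum_congr rfl fun i _ => Finset.sum_comm
          _ = ∑ t ∈ s, ∑ i, ∑ j, (Z t i j) ^ 2 := Finset.sum_comm

/-! ### PSD helpers -/

lemma psd_conj {p q : ℕ} {X : Matrix (Fin p) (Fin p) ℝ} (hX : X.PosSemidef)
    (B : Matrix (Fin q) (Fin p) ℝ) : (B * X * Bᵀ).PosSemidef := by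
  simpa [Matrix.conjTranspose_eq_transpose_of_trivial] using hX.mul_mul_conjTranspose_same B

lemma smul_one_diag {p : ℕ} (c : ℝ) :
    c • (1 : Matrix (Fin p) (Fin p) ℝ) = Matrix.diagonal (fun _ => c) := by
  ext i j
  by_cases hij : i = j <;> simp [Matrix.one_apply, Matrix.diagonal_apply, hij]

lemma unitary_conj_psd {p : ℕ} {U D : Matrix (Fin p) (Fin p) ℝ} (hD : D.PosSemidef) :
    (U * D * star U).PosSemidef := by
  simpa [Matrix.star_eq_conjTranspose] using hD.mul_mul_conjTranspose_same U

lemma psd_smul_one_sub {p : ℕ} {M : Matrix (Fin p) (Fin p) ℝ} (hM : M.IsHermitian) {c : ℝ}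
    (h : ∀ i, hM.eigenvalues i ≤ c) :
    (c • (1 : Matrix (Fin p) (Fin p) ℝ) - M).PosSemidef := by
  set U : Matrix (Fin p) (Fin p) ℝ := (hM.eigenvectorUnitary : Matrix (Fin p) (Fin p) ℝ) with hUdef
  have hU1 : U * star U = 1 := (Matrix.mem_unitaryGroup_iff).mp hM.eigenvectorUnitary.2
  have hcU : ∀ c' : ℝ, U * Matrix.diagonal (fun _ => c') * star U
      = c' • (1 : Matrix (Fin p) (Fin p) ℝ) := by
    intro c'
    rw [← smul_one_diag, Matrix.mul_smul, mul_one, Matrix.smul_mul, hU1]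
  have hd : Matrix.diagonal (fun i => c - hM.eigenvalues i)
      = Matrix.diagonal (fun _ => c) - Matrix.diagonal (RCLike.ofReal ∘ hM.eigenvalues) := by
    rw [← Matrix.diagonal_sub]
    congr 1
  have key : U * Matrix.diagonal (fun i => c - hM.eigenvalues i) * star U
      = c • (1 : Matrix (Fin p) (Fin p) ℝ) - M := by
    conv_rhs => rw [hM.spectral_theorem, Unitary.conjStarAlgAut_apply]
    rw [hd, Matrix.mul_sub, Matrix.sub_mul, hcU, ← hUdef]
  rw [← key]
  exact unitary_conj_psd (Matrix.posSemidef_diagonal_iff.mpr (fun i => by simpa using h i))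

lemma psd_sub_smul_one {p : ℕ} {M : Matrix (Fin p) (Fin p) ℝ} (hM : M.IsHermitian) {c : ℝ}
    (h : ∀ i, c ≤ hM.eigenvalues i) :
    (M - c • (1 : Matrix (Fin p) (Fin p) ℝ)).PosSemidef := by
  set U : Matrix (Fin p) (Fin p) ℝ := (hM.eigenvectorUnitary : Matrix (Fin p) (Fin p) ℝ) with hUdef
  have hU1 : U * star U = 1 := (Matrix.mem_unitaryGroup_iff).mp hM.eigenvectorUnitary.2
  have hcU : ∀ c' : ℝ, U * Matrix.diagonal (fun _ => c') * star U
      = c' • (1 : Matrix (Fin p) (Fin p) ℝ) := by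
    intro c'
    rw [← smul_one_diag, Matrix.mul_smul, mul_one, Matrix.smul_mul, hU1]
  have hd : Matrix.diagonal (fun i => hM.eigenvalues i - c)
      = Matrix.diagonal (RCLike.ofReal ∘ hM.eigenvalues) - Matrix.diagonal (fun _ => c) := by
    rw [← Matrix.diagonal_sub]
    congr 1
  have key : U * Matrix.diagonal (fun i => hM.eigenvalues i - c) * star U
      = M - c • (1 : Matrix (Fin p) (Fin p) ℝ) := by
    conv_rhs => rw [hM.spectral_theorem, Unitary.conjStarAlgAut_apply]
    rw [hd, Matrix.mul_sub, Matrix.sub_mul, hcU, ← hUdef]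
  rw [← key]
  exact unitary_conj_psd (Matrix.posSemidef_diagonal_iff.mpr (fun i => by simpa using h i))

lemma trace_eq_sum_eigenvalues {p : ℕ} {M : Matrix (Fin p) (Fin p) ℝ} (hM : M.IsHermitian) :
    M.trace = ∑ i, hM.eigenvalues i := by
  conv_lhs => rw [hM.spectral_theorem, Unitary.conjStarAlgAut_apply]
  rw [Matrix.trace_mul_cycle]
  rw [(Matrix.mem_unitaryGroup_iff').mp hM.eigenvectorUnitary.2, one_mul]
  simp [Matrix.trace_diagonal, RCLike.ofReal_real_eq_id]

lemma trace_nonneg_of_psd {p : ℕ} {X : Matrix (Fin p) (Fin p) ℝ} (hX : X.PosSemidef) :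
    0 ≤ X.trace := by
  rw [trace_eq_sum_eigenvalues hX.1]
  exact Finset.sum_nonneg fun i _ => hX.eigenvalues_nonneg i

lemma trace_mono_of_psd {p : ℕ} {X Y : Matrix (Fin p) (Fin p) ℝ} (h : (Y - X).PosSemidef) :
    X.trace ≤ Y.trace := by
  have := trace_nonneg_of_psd h
  rw [Matrix.trace_sub] at this
  linarith

lemma psd_le_trace_smul_one {p : ℕ} {X : Matrix (Fin p) (Fin p) ℝ} (hX : X.PosSemidef) :
    (X.trace • (1 : Matrix (Fin p) (Fin p) ℝ) - X).PosSemidef := by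
  apply psd_smul_one_sub hX.1
  intro i
  rw [trace_eq_sum_eigenvalues hX.1]
  exact Finset.single_le_sum (fun j _ => hX.eigenvalues_nonneg j) (Finset.mem_univ i)

lemma posdef_exists_sub_smul_one {p : ℕ} (hp : 0 < p) {M : Matrix (Fin p) (Fin p) ℝ}
    (hM : M.PosDef) : ∃ r : ℝ, 0 < r ∧ (M - r • (1 : Matrix (Fin p) (Fin p) ℝ)).PosSemidef := by
  have hne : (Finset.univ : Finset (Fin p)).Nonempty := by
    simpa [Finset.univ_nonempty_iff] using Fin.pos_iff_nonempty.mp hp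
  refine ⟨Finset.univ.inf' hne hM.1.eigenvalues, ?_, ?_⟩
  · obtain ⟨i, _, hi⟩ := Finset.exists_mem_eq_inf' hne hM.1.eigenvalues
    rw [hi]
    exact hM.eigenvalues_pos i
  · exact psd_sub_smul_one hM.1 fun i => Finset.inf'_le _ (Finset.mem_univ i)

/-- `Tr (B X Bᵀ) ≤ Tr X * Tr (B Bᵀ)` for `X` PSD. -/
lemma trace_conj_le {p q : ℕ} {X : Matrix (Fin p) (Fin p) ℝ} (hX : X.PosSemidef)
    (B : Matrix (Fin q) (Fin p) ℝ) :
    (B * X * Bᵀ).trace ≤ X.trace * (B * Bᵀ).trace := by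
  have h1 : (B * (X.trace • (1 : Matrix (Fin p) (Fin p) ℝ) - X) * Bᵀ).PosSemidef :=
    psd_conj (psd_le_trace_smul_one hX) B
  have h2 : B * (X.trace • (1 : Matrix (Fin p) (Fin p) ℝ) - X) * Bᵀ
      = X.trace • (B * Bᵀ) - B * X * Bᵀ := by
    simp [Matrix.mul_sub, Matrix.sub_mul, Matrix.mul_smul, Matrix.smul_mul]
  rw [h2] at h1
  have := trace_mono_of_psd h1
  simpa [Matrix.trace_smul, smul_eq_mul] using this

/-- `r • Tr (Y Yᵀ) ≤ Tr (Y M Yᵀ)` when `M - r • 1` is PSD. -/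
lemma trace_conj_ge {p q : ℕ} {M : Matrix (Fin p) (Fin p) ℝ} {r : ℝ}
    (h : (M - r • (1 : Matrix (Fin p) (Fin p) ℝ)).PosSemidef)
    (Y : Matrix (Fin q) (Fin p) ℝ) :
    r * (Y * Yᵀ).trace ≤ (Y * M * Yᵀ).trace := by
  have h1 : (Y * (M - r • (1 : Matrix (Fin p) (Fin p) ℝ)) * Yᵀ).PosSemidef := psd_conj h Y
  have h2 : Y * (M - r • (1 : Matrix (Fin p) (Fin p) ℝ)) * Yᵀ
      = Y * M * Yᵀ - r • (Y * Yᵀ) := by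
    simp [Matrix.mul_sub, Matrix.sub_mul, Matrix.mul_smul, Matrix.smul_mul]
  rw [h2] at h1
  have := trace_mono_of_psd h1
  simpa [Matrix.trace_smul, smul_eq_mul] using this

/-- A matrix of full row rank times its transpose is positive definite. -/
lemma posdef_self_mul_transpose {p : ℕ} {κ : Type*} [Fintype κ] {B : Matrix (Fin p) κ ℝ}
    (hB : B.rank = p) : (B * Bᵀ).PosDef := by
  have hherm : (B * Bᵀ).IsHermitian := by
    unfold Matrix.IsHermitian
    rw [Matrix.conjTranspose_eq_transpose_of_trivial, Matrix.transpose_mul,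
      Matrix.transpose_transpose]
  refine Matrix.posDef_iff_dotProduct_mulVec.mpr ⟨hherm, fun v hv => ?_⟩
  have hw : Bᵀ *ᵥ v ≠ 0 := by
    intro hcon
    apply hv
    have hrank : Bᵀ.rank = p := by rw [Matrix.rank_transpose, hB]
    have hker : LinearMap.ker (Bᵀ.mulVecLin) = ⊥ := by
      have h1 := Bᵀ.mulVecLin.finrank_range_add_finrank_ker
      rw [show Module.finrank ℝ (LinearMap.range Bᵀ.mulVecLin) = p from hrank] at h1
      simp only [Module.finrank_fintype_fun_eq_card, Fintype.card_fin] at h1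
      have h2 : Module.finrank ℝ (LinearMap.ker Bᵀ.mulVecLin) = 0 := by omega
      exact Submodule.finrank_eq_zero.mp h2
    have : v ∈ LinearMap.ker Bᵀ.mulVecLin := by
      simpa [Matrix.mulVecLin_apply, Matrix.mulVec_transpose] using hcon
    rw [hker] at this
    simpa using this
  have hmain : v ⬝ᵥ (B * Bᵀ) *ᵥ v = (Bᵀ *ᵥ v) ⬝ᵥ (Bᵀ *ᵥ v) := by
    rw [← Matrix.mulVec_mulVec, Matrix.dotProduct_mulVec, ← Matrix.mulVec_transpose]
  have hstar : star v = v := by funext i; simp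
  rw [hstar, hmain]
  have h0 : (0:ℝ) ≤ (Bᵀ *ᵥ v) ⬝ᵥ (Bᵀ *ᵥ v) :=
    Finset.sum_nonneg fun i _ => mul_self_nonneg _
  refine lt_of_le_of_ne h0 fun hcon => ?_
  exact hw (dotProduct_self_eq_zero.mp hcon.symm)

/-- The square root of a PSD matrix (the former Mathlib definition). -/
def _root_.Matrix.PosSemidef.sqrt {p : ℕ} {X : Matrix (Fin p) (Fin p) ℝ} (hX : X.PosSemidef) :
    Matrix (Fin p) (Fin p) ℝ :=
  (hX.1.eigenvectorUnitary : Matrix (Fin p) (Fin p) ℝ) *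
    diagonal ((RCLike.ofReal : ℝ → ℝ) ∘ Real.sqrt ∘ hX.1.eigenvalues) *
    star (hX.1.eigenvectorUnitary : Matrix (Fin p) (Fin p) ℝ)

lemma _root_.Matrix.PosSemidef.posSemidef_sqrt {p : ℕ} {X : Matrix (Fin p) (Fin p) ℝ}
    (hX : X.PosSemidef) : hX.sqrt.PosSemidef :=
  unitary_conj_psd (Matrix.posSemidef_diagonal_iff.mpr (fun i => by
    simpa using Real.sqrt_nonneg (hX.1.eigenvalues i)))

lemma _root_.Matrix.PosSemidef.sqrt_mul_self {p : ℕ} {X : Matrix (Fin p) (Fin p) ℝ}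
    (hX : X.PosSemidef) : hX.sqrt * hX.sqrt = X := by
  set U : Matrix (Fin p) (Fin p) ℝ := (hX.1.eigenvectorUnitary : Matrix (Fin p) (Fin p) ℝ)
    with hUdef
  have hU : star U * U = 1 := (Matrix.mem_unitaryGroup_iff').mp hX.1.eigenvectorUnitary.2
  conv_rhs => rw [hX.1.spectral_theorem, Unitary.conjStarAlgAut_apply]
  rw [Matrix.PosSemidef.sqrt, ← hUdef]
  have hD : diagonal ((RCLike.ofReal : ℝ → ℝ) ∘ Real.sqrt ∘ hX.1.eigenvalues) *
      diagonal ((RCLike.ofReal : ℝ → ℝ) ∘ Real.sqrt ∘ hX.1.eigenvalues)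
      = diagonal (RCLike.ofReal ∘ hX.1.eigenvalues) := by
    rw [Matrix.diagonal_mul_diagonal]
    congr 1
    funext i
    simp [Real.mul_self_sqrt (hX.eigenvalues_nonneg i)]
  calc U * diagonal ((RCLike.ofReal : ℝ → ℝ) ∘ Real.sqrt ∘ hX.1.eigenvalues) * star U *
        (U * diagonal ((RCLike.ofReal : ℝ → ℝ) ∘ Real.sqrt ∘ hX.1.eigenvalues) * star U)
      = U * (diagonal ((RCLike.ofReal : ℝ → ℝ) ∘ Real.sqrt ∘ hX.1.eigenvalues) * (star U * U) *
        diagonal ((RCLike.ofReal : ℝ → ℝ) ∘ Real.sqrt ∘ hX.1.eigenvalues)) * star U := by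
        simp only [Matrix.mul_assoc]
    _ = U * diagonal (RCLike.ofReal ∘ hX.1.eigenvalues) * star U := by
        rw [hU, Matrix.mul_one, hD]

/-! ### Riccati operator algebra -/

lemma transpose_of_herm {p : ℕ} {X : Matrix (Fin p) (Fin p) ℝ} (h : X.IsHermitian) : Xᵀ = X := by
  rw [← Matrix.conjTranspose_eq_transpose_of_trivial]; exact h

variable {n m : ℕ}

/-- The optimal Kalman gain. -/
def gainM (A : Matrix (Fin n) (Fin n) ℝ) (C : Matrix (Fin m) (Fin n) ℝ)
    (R : Matrix (Fin m) (Fin m) ℝ) (X : Matrix (Fin n) (Fin n) ℝ) : Matrix (Fin n) (Fin m) ℝ :=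
  A * X * Cᵀ * (C * X * Cᵀ + R)⁻¹

/-- The suboptimal-gain Riccati map. -/
def phiOp (A Q : Matrix (Fin n) (Fin n) ℝ) (C : Matrix (Fin m) (Fin n) ℝ)
    (R : Matrix (Fin m) (Fin m) ℝ) (K : Matrix (Fin n) (Fin m) ℝ)
    (X : Matrix (Fin n) (Fin n) ℝ) : Matrix (Fin n) (Fin n) ℝ :=
  (A - K * C) * X * (A - K * C)ᵀ + Q + K * R * Kᵀ

lemma innov_posdef {C : Matrix (Fin m) (Fin n) ℝ} {R : Matrix (Fin m) (Fin m) ℝ}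
    (hR : R.PosDef) {X : Matrix (Fin n) (Fin n) ℝ} (hX : X.PosSemidef) :
    (C * X * Cᵀ + R).PosDef :=
  Matrix.PosDef.posSemidef_add (psd_conj hX C) hR

lemma phi_sub_g {A Q : Matrix (Fin n) (Fin n) ℝ} {C : Matrix (Fin m) (Fin n) ℝ}
    {R : Matrix (Fin m) (Fin m) ℝ} (hR : R.PosDef) {X : Matrix (Fin n) (Fin n) ℝ}
    (hX : X.PosSemidef) (K : Matrix (Fin n) (Fin m) ℝ) :
    phiOp A Q C R K X = gOp A Q C R X
      + (K - gainM A C R X) * (C * X * Cᵀ + R) * (K - gainM A C R X)ᵀ := by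
  have hXt : Xᵀ = X := transpose_of_herm hX.1
  have hMpd : (C * X * Cᵀ + R).PosDef := innov_posdef hR hX
  have hMherm : (C * X * Cᵀ + R)ᵀ = C * X * Cᵀ + R := transpose_of_herm hMpd.1
  have hdet : IsUnit (C * X * Cᵀ + R).det := isUnit_iff_ne_zero.mpr hMpd.det_pos.ne'
  simp only [phiOp, gOp, gainM]
  set M : Matrix (Fin m) (Fin m) ℝ := C * X * Cᵀ + R with hM
  set N : Matrix (Fin m) (Fin m) ℝ := M⁻¹ with hN
  have hMN : M * N = 1 := Matrix.mul_nonsing_inv M hdet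
  have hNM : N * M = 1 := Matrix.nonsing_inv_mul M hdet
  have hNt : Nᵀ = N := by rw [hN, Matrix.transpose_nonsing_inv, hMherm]
  have hMNl : ∀ Y : Matrix (Fin m) (Fin n) ℝ, M * (N * Y) = Y := by
    intro Y; rw [← Matrix.mul_assoc, hMN, Matrix.one_mul]
  have hNMl : ∀ Y : Matrix (Fin m) (Fin n) ℝ, N * (M * Y) = Y := by
    intro Y; rw [← Matrix.mul_assoc, hNM, Matrix.one_mul]
  simp only [Matrix.transpose_sub, Matrix.transpose_mul, Matrix.transpose_transpose, hXt, hNt]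
  simp only [Matrix.sub_mul, Matrix.mul_sub, Matrix.add_mul, Matrix.mul_add, Matrix.mul_assoc]
  simp only [hMNl, hNMl]
  rw [hM]
  simp only [Matrix.sub_mul, Matrix.mul_sub, Matrix.add_mul, Matrix.mul_add, Matrix.mul_assoc]
  abel

lemma phi_psd {A Q : Matrix (Fin n) (Fin n) ℝ} {C : Matrix (Fin m) (Fin n) ℝ}
    {R : Matrix (Fin m) (Fin m) ℝ} (hQ : Q.PosSemidef) (hR : R.PosDef)
    {X : Matrix (Fin n) (Fin n) ℝ} (hX : X.PosSemidef) (K : Matrix (Fin n) (Fin m) ℝ) :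
    (phiOp A Q C R K X).PosSemidef :=
  ((psd_conj hX (A - K * C)).add hQ).add (psd_conj hR.posSemidef K)

lemma g_eq_phi {A Q : Matrix (Fin n) (Fin n) ℝ} {C : Matrix (Fin m) (Fin n) ℝ}
    {R : Matrix (Fin m) (Fin m) ℝ} (hR : R.PosDef) {X : Matrix (Fin n) (Fin n) ℝ}
    (hX : X.PosSemidef) :
    gOp A Q C R X = phiOp A Q C R (gainM A C R X) X := by
  rw [phi_sub_g hR hX (gainM A C R X)]
  simp

lemma g_le_phi {A Q : Matrix (Fin n) (Fin n) ℝ} {C : Matrix (Fin m) (Fin n) ℝ}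
    {R : Matrix (Fin m) (Fin m) ℝ} (hR : R.PosDef) {X : Matrix (Fin n) (Fin n) ℝ}
    (hX : X.PosSemidef) (K : Matrix (Fin n) (Fin m) ℝ) :
    (phiOp A Q C R K X - gOp A Q C R X).PosSemidef := by
  rw [phi_sub_g hR hX K]
  simpa using psd_conj (innov_posdef hR hX).posSemidef (K - gainM A C R X)

lemma phi_mono {A Q : Matrix (Fin n) (Fin n) ℝ} {C : Matrix (Fin m) (Fin n) ℝ}
    {R : Matrix (Fin m) (Fin m) ℝ} (K : Matrix (Fin n) (Fin m) ℝ)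
    {X Y : Matrix (Fin n) (Fin n) ℝ} (h : (Y - X).PosSemidef) :
    (phiOp A Q C R K Y - phiOp A Q C R K X).PosSemidef := by
  have hid : phiOp A Q C R K Y - phiOp A Q C R K X
      = (A - K * C) * (Y - X) * (A - K * C)ᵀ := by
    simp only [phiOp, Matrix.mul_sub, Matrix.sub_mul]
    abel
  rw [hid]
  exact psd_conj h _

lemma hOp_eq_phi {A Q : Matrix (Fin n) (Fin n) ℝ} {C : Matrix (Fin m) (Fin n) ℝ}
    {R : Matrix (Fin m) (Fin m) ℝ} (X : Matrix (Fin n) (Fin n) ℝ) :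
    hOp A Q X = phiOp A Q C R 0 X := by
  simp [hOp, phiOp]

/-! ### The trajectory, its gains, and transition products -/

variable (A Q : Matrix (Fin n) (Fin n) ℝ) (C : Matrix (Fin m) (Fin n) ℝ)
  (R : Matrix (Fin m) (Fin m) ℝ) (z : ℕ → Bool) (T : Matrix (Fin n) (Fin n) ℝ)

/-- Gain sequence along the trajectory started at `T`. -/
def KK (k : ℕ) : Matrix (Fin n) (Fin m) ℝ :=
  if z k then gainM A C R (detFilt A Q C R z T k) else 0

/-- Closed-loop transition matrices. -/
def FF (k : ℕ) : Matrix (Fin n) (Fin n) ℝ := A - KK A Q C R z T k * C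

/-- `VV j k = F (k-1) * ⋯ * F j`. -/
def VV (j k : ℕ) : Matrix (Fin n) (Fin n) ℝ :=
  (((List.range' j (k - j)).map (FF A Q C R z T)).reverse).prod

lemma VV_self (j : ℕ) : VV A Q C R z T j j = 1 := by
  simp [VV]

lemma VV_succ {j k : ℕ} (h : j ≤ k) :
    VV A Q C R z T j (k + 1) = FF A Q C R z T k * VV A Q C R z T j k := by
  have h3 : List.range' j (k + 1 - j) = List.range' j (k - j) ++ [k] := by
    have h4 := List.range'_concat (step := 1) (s := j) (n := k - j)
    rw [show j + 1 * (k - j) = k by omega] at h4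
    rw [show k + 1 - j = (k - j) + 1 by omega, h4]
  rw [VV, VV, h3]
  simp

lemma VV_peel {j k : ℕ} (h : j < k) :
    VV A Q C R z T j k = VV A Q C R z T (j + 1) k * FF A Q C R z T j := by
  have h1 : k - j = (k - (j + 1)) + 1 := by omega
  rw [VV, VV, h1, List.range'_succ]
  simp

lemma VV_comp {i j k : ℕ} (hij : i ≤ j) (hjk : j ≤ k) :
    VV A Q C R z T j k * VV A Q C R z T i j = VV A Q C R z T i k := by
  have h3 : List.range' i (k - i) = List.range' i (j - i) ++ List.range' j (k - j) := by
    have h4 := List.range'_append (step := 1) (s := i) (m := j - i) (n := k - j)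
    rw [show i + 1 * (j - i) = j by omega] at h4
    rw [h4]
    congr 1
    omega
  rw [VV, VV, VV, h3]
  simp

variable {A Q : Matrix (Fin n) (Fin n) ℝ} {C : Matrix (Fin m) (Fin n) ℝ}
  {R : Matrix (Fin m) (Fin m) ℝ} {z : ℕ → Bool} {T : Matrix (Fin n) (Fin n) ℝ}

lemma detFilt_psd (hQ : Q.PosSemidef) (hR : R.PosDef) (hT : T.PosSemidef) :
    ∀ k, (detFilt A Q C R z T k).PosSemidef := by
  intro k
  induction k with
  | zero => exact hT
  | succ k ih =>
      by_cases hz : z k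
      · simp only [detFilt, hz, if_true]
        rw [g_eq_phi hR ih]
        exact phi_psd hQ hR ih _
      · simp only [detFilt, hz, if_false]
        rw [hOp_eq_phi (C := C) (R := R)]
        exact phi_psd hQ hR ih _

lemma detFilt_succ (hQ : Q.PosSemidef) (hR : R.PosDef) (hT : T.PosSemidef) (k : ℕ) :
    detFilt A Q C R z T (k + 1)
      = phiOp A Q C R (KK A Q C R z T k) (detFilt A Q C R z T k) := by
  by_cases hz : z k
  · simp only [detFilt, hz, if_true, KK]
    exact g_eq_phi hR (detFilt_psd hQ hR hT k)
  · simp only [detFilt, hz, if_false, KK]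
    exact hOp_eq_phi _

lemma detFilt_formula (hQ : Q.PosSemidef) (hR : R.PosDef) (hT : T.PosSemidef) (k : ℕ) :
    detFilt A Q C R z T k
      = VV A Q C R z T 0 k * T * (VV A Q C R z T 0 k)ᵀ
        + ∑ t ∈ Finset.range k, VV A Q C R z T (t + 1) k
            * (Q + KK A Q C R z T t * R * (KK A Q C R z T t)ᵀ)
            * (VV A Q C R z T (t + 1) k)ᵀ := by
  induction k with
  | zero => simp [detFilt, VV_self]
  | succ k ih =>
      rw [detFilt_succ hQ hR hT k, phiOp, ih]
      rw [Finset.sum_range_succ, VV_self]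
      rw [VV_succ A Q C R z T (Nat.zero_le k)]
      have hsucc : ∀ t, t < k → VV A Q C R z T (t + 1) (k + 1)
          = FF A Q C R z T k * VV A Q C R z T (t + 1) k := fun t ht =>
        VV_succ A Q C R z T (by omega)
      have hs : ∑ t ∈ Finset.range k, VV A Q C R z T (t + 1) (k + 1)
            * (Q + KK A Q C R z T t * R * (KK A Q C R z T t)ᵀ)
            * (VV A Q C R z T (t + 1) (k + 1))ᵀ
          = ∑ t ∈ Finset.range k, (FF A Q C R z T k * VV A Q C R z T (t + 1) k)
            * (Q + KK A Q C R z T t * R * (KK A Q C R z T t)ᵀ)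
            * (FF A Q C R z T k * VV A Q C R z T (t + 1) k)ᵀ :=
        Finset.sum_congr rfl fun t ht => by rw [hsucc t (Finset.mem_range.mp ht)]
      rw [hs]
      have hFF : A - KK A Q C R z T k * C = FF A Q C R z T k := rfl
      rw [hFF]
      simp only [Matrix.transpose_mul, Matrix.transpose_one, Matrix.one_mul, Matrix.mul_one,
        Matrix.mul_add, Matrix.add_mul, Finset.mul_sum, Finset.sum_mul]
      simp only [Matrix.mul_assoc]
      abel

lemma phi_diff (A Q : Matrix (Fin n) (Fin n) ℝ) (C : Matrix (Fin m) (Fin n) ℝ)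
    (R : Matrix (Fin m) (Fin m) ℝ) (K : Matrix (Fin n) (Fin m) ℝ)
    (X Y : Matrix (Fin n) (Fin n) ℝ) :
    phiOp A Q C R K Y - phiOp A Q C R K X = (A - K * C) * (Y - X) * (A - K * C)ᵀ := by
  simp only [phiOp, Matrix.mul_sub, Matrix.sub_mul]
  abel

/-- The comparison bound: the trajectory from a larger initial condition `S` stays above the
one from `T`, and the difference is dominated by the conjugated initial difference. -/
lemma detFilt_compare (hQ : Q.PosSemidef) (hR : R.PosDef) (hT : T.PosSemidef)
    {S : Matrix (Fin n) (Fin n) ℝ} (hS : S.PosSemidef) (hTS : (S - T).PosSemidef) :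
    ∀ k, (detFilt A Q C R z S k - detFilt A Q C R z T k).PosSemidef
      ∧ (VV A Q C R z T 0 k * (S - T) * (VV A Q C R z T 0 k)ᵀ
          - (detFilt A Q C R z S k - detFilt A Q C R z T k)).PosSemidef := by
  intro k
  induction k with
  | zero =>
      refine ⟨hTS, ?_⟩
      simp only [detFilt, VV_self, Matrix.one_mul, Matrix.transpose_one, Matrix.mul_one,
        sub_self]
      exact Matrix.PosSemidef.zero
  | succ k ih =>
      have hPk := detFilt_psd (A := A) (C := C) (z := z) hQ hR hT k
      have hP'k := detFilt_psd (A := A) (C := C) (z := z) hQ hR hS k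
      -- upper: detFilt S (k+1) ≤ phiOp (KK k) (detFilt S k)
      have hup : (phiOp A Q C R (KK A Q C R z T k) (detFilt A Q C R z S k)
          - detFilt A Q C R z S (k + 1)).PosSemidef := by
        by_cases hz : z k
        · simp only [detFilt, hz, if_true, KK]
          exact g_le_phi hR hP'k _
        · simp only [detFilt, KK, hz, Bool.false_eq_true, if_false]
          rw [hOp_eq_phi (C := C) (R := R), sub_self]
          exact Matrix.PosSemidef.zero
      -- lower: phiOp (gain of S traj) bound gives monotonicity
      have hlow : (detFilt A Q C R z S (k + 1) - detFilt A Q C R z T (k + 1)).PosSemidef := by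
        by_cases hz : z k
        · simp only [detFilt, hz, if_true]
          have h1 := g_le_phi (A := A) (Q := Q) (C := C) hR hPk
            (gainM A C R (detFilt A Q C R z S k))
          have h2 := phi_mono (A := A) (Q := Q) (C := C) (R := R)
            (gainM A C R (detFilt A Q C R z S k)) ih.1
          have h3 := h2.add h1
          rw [g_eq_phi hR hP'k]
          convert h3 using 1
          abel
        · simp only [detFilt, hz, Bool.false_eq_true, if_false]
          have h2 := phi_mono (A := A) (Q := Q) (C := C) (R := R) 0 ih.1
          rw [hOp_eq_phi (C := C) (R := R), hOp_eq_phi (C := C) (R := R)]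
          convert h2 using 1
      refine ⟨hlow, ?_⟩
      have h1 : FF A Q C R z T k * (VV A Q C R z T 0 k * (S - T) * (VV A Q C R z T 0 k)ᵀ)
            * (FF A Q C R z T k)ᵀ
          = VV A Q C R z T 0 (k+1) * (S - T) * (VV A Q C R z T 0 (k+1))ᵀ := by
        rw [VV_succ A Q C R z T (Nat.zero_le k)]
        simp only [Matrix.transpose_mul, Matrix.mul_assoc]
      have h2 : FF A Q C R z T k * (detFilt A Q C R z S k - detFilt A Q C R z T k)
            * (FF A Q C R z T k)ᵀ
          = phiOp A Q C R (KK A Q C R z T k) (detFilt A Q C R z S k)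
            - detFilt A Q C R z T (k + 1) := by
        have hFFdef : FF A Q C R z T k = A - KK A Q C R z T k * C := rfl
        rw [hFFdef, detFilt_succ hQ hR hT k, ← phi_diff]
      have hexp : FF A Q C R z T k * (VV A Q C R z T 0 k * (S - T) * (VV A Q C R z T 0 k)ᵀ
              - (detFilt A Q C R z S k - detFilt A Q C R z T k)) * (FF A Q C R z T k)ᵀ
          = FF A Q C R z T k * (VV A Q C R z T 0 k * (S - T) * (VV A Q C R z T 0 k)ᵀ)
              * (FF A Q C R z T k)ᵀ
            - FF A Q C R z T k * (detFilt A Q C R z S k - detFilt A Q C R z T k)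
              * (FF A Q C R z T k)ᵀ := by
        rw [Matrix.mul_sub, Matrix.sub_mul]
      have key : VV A Q C R z T 0 (k+1) * (S - T) * (VV A Q C R z T 0 (k+1))ᵀ
            - (detFilt A Q C R z S (k+1) - detFilt A Q C R z T (k+1))
          = FF A Q C R z T k * (VV A Q C R z T 0 k * (S - T) * (VV A Q C R z T 0 k)ᵀ)
              * (FF A Q C R z T k)ᵀ
            - FF A Q C R z T k * (detFilt A Q C R z S k - detFilt A Q C R z T k)
              * (FF A Q C R z T k)ᵀ
            + (phiOp A Q C R (KK A Q C R z T k) (detFilt A Q C R z S k)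
              - detFilt A Q C R z S (k + 1)) := by
        rw [h1, h2]
        abel
      rw [key, ← hexp]
      exact (psd_conj ih.2 _).add hup

/-- Unrolling the product backwards along pure `A`-dynamics, with gain corrections. -/
lemma VV_unroll_A (hQ : Q.PosSemidef) :
    ∀ s j k : ℕ, j + s ≤ k →
      VV A Q C R z T j k
        = VV A Q C R z T (j + s) k * A ^ s
          - ∑ l ∈ Finset.range s,
              VV A Q C R z T (j + l + 1) k * KK A Q C R z T (j + l) * C * A ^ l := by
  intro s
  induction s with
  | zero => intro j k h; simp
  | succ s ih =>
      intro j k h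
      have hjk : j < k := by omega
      have hpeel := VV_peel A Q C R z T hjk
      have hFF : FF A Q C R z T j = A - KK A Q C R z T j * C := rfl
      have ihj := ih (j + 1) k (by omega)
      calc VV A Q C R z T j k
          = VV A Q C R z T (j + 1) k * A
            - VV A Q C R z T (j + 1) k * KK A Q C R z T j * C := by
            rw [hpeel, hFF, Matrix.mul_sub]
            rw [Matrix.mul_assoc]
        _ = (VV A Q C R z T (j + 1 + s) k * A ^ s
              - ∑ l ∈ Finset.range s,
                  VV A Q C R z T (j + 1 + l + 1) k * KK A Q C R z T (j + 1 + l) * C * A ^ l) * A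
            - VV A Q C R z T (j + 1) k * KK A Q C R z T j * C := by rw [← ihj]
        _ = VV A Q C R z T (j + (s + 1)) k * A ^ (s + 1)
            - (∑ l ∈ Finset.range s,
                VV A Q C R z T (j + (l + 1) + 1) k * KK A Q C R z T (j + (l + 1)) * C * A ^ (l + 1)
              + VV A Q C R z T (j + 0 + 1) k * KK A Q C R z T (j + 0) * C * A ^ 0) := by
            have ha : VV A Q C R z T (j + 1 + s) k * A ^ s * A
                = VV A Q C R z T (j + (s + 1)) k * A ^ (s + 1) := by
              rw [show j + 1 + s = j + (s + 1) from by omega, pow_succ, Matrix.mul_assoc]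
            have hb : ∑ l ∈ Finset.range s,
                  VV A Q C R z T (j + 1 + l + 1) k * KK A Q C R z T (j + 1 + l) * C * A ^ l * A
                = ∑ l ∈ Finset.range s, VV A Q C R z T (j + (l + 1) + 1) k
                    * KK A Q C R z T (j + (l + 1)) * C * A ^ (l + 1) :=
              Finset.sum_congr rfl fun l _ => by
                rw [show j + 1 + l + 1 = j + (l + 1) + 1 from by omega,
                  show j + 1 + l = j + (l + 1) from by omega, pow_succ, Matrix.mul_assoc]
            rw [Matrix.sub_mul, Finset.sum_mul, ha, hb]
            simp only [Nat.add_zero, pow_zero, Matrix.mul_one]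
            abel
        _ = VV A Q C R z T (j + (s + 1)) k * A ^ (s + 1)
            - ∑ l ∈ Finset.range (s + 1),
                VV A Q C R z T (j + l + 1) k * KK A Q C R z T (j + l) * C * A ^ l := by
            rw [Finset.sum_range_succ']

lemma sqn_add_le {p q : ℕ} (X Y : Matrix (Fin p) (Fin q) ℝ) :
    sqn (X + Y) ≤ 2 * sqn X + 2 * sqn Y := by
  have h : ∀ i j, ((X + Y) i j) ^ 2 ≤ 2 * (X i j) ^ 2 + 2 * (Y i j) ^ 2 := by
    intro i j
    have := sq_nonneg (X i j - Y i j)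
    simp only [Matrix.add_apply]
    nlinarith
  calc sqn (X + Y) ≤ ∑ i, ∑ j, (2 * (X i j) ^ 2 + 2 * (Y i j) ^ 2) := by
        apply Finset.sum_le_sum; intro i _; apply Finset.sum_le_sum; intro j _; exact h i j
    _ = 2 * sqn X + 2 * sqn Y := by
        simp [sqn, Finset.sum_add_distrib, Finset.mul_sum]

lemma sum_shift_le (g : ℕ → ℝ) (hg : ∀ t, 0 ≤ g t) {a i k : ℕ} (h : a + i ≤ k) :
    ∑ l ∈ Finset.range i, g (a + l) ≤ ∑ t ∈ Finset.range k, g t := by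
  have h1 : ∑ l ∈ Finset.range i, g (a + l) = ∑ t ∈ Finset.Ico a (a + i), g t := by
    rw [Finset.sum_Ico_eq_sum_range]
    simp
  rw [h1]
  apply Finset.sum_le_sum_of_subset_of_nonneg
  · intro t ht
    simp only [Finset.mem_Ico] at ht
    simp only [Finset.mem_range]
    omega
  · intro t _ _
    exact hg t

lemma trace_conj_Q {p : ℕ} {Q : Matrix (Fin n) (Fin n) ℝ} (hQ : Q.PosSemidef)
    (Y : Matrix (Fin p) (Fin n) ℝ) : (Y * Q * Yᵀ).trace = sqn (Y * hQ.sqrt) := by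
  have h1 : hQ.sqrtᵀ = hQ.sqrt := transpose_of_herm hQ.posSemidef_sqrt.1
  rw [sqn_eq_trace, Matrix.transpose_mul, h1, ← Matrix.mul_assoc,
    Matrix.mul_assoc Y hQ.sqrt hQ.sqrt, hQ.sqrt_mul_self]

/-- The key quantitative bound: `α · ‖V_{n,k}‖² ≤ 2B + 2n²·cA·‖C‖²·B/r`. -/
lemma sqn_VV_bound (hQ : Q.PosSemidef) (hR : R.PosDef) (hT : T.PosSemidef)
    {α r cA : ℝ} (hα : 0 < α) (hr : 0 < r) (hcA0 : 0 ≤ cA)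
    (hW : ((∑ i ∈ Finset.range n, A ^ i * Q * (A ^ i)ᵀ) - α • 1).PosSemidef)
    (hRr : (R - r • 1).PosSemidef)
    (hcA : ∀ l, l < n → sqn (A ^ l * hQ.sqrt) ≤ cA)
    {k : ℕ} (hk : n ≤ k) {B : ℝ} (hB : (detFilt A Q C R z T k).trace ≤ B) :
    α * sqn (VV A Q C R z T n k)
      ≤ 2 * B + 2 * (n : ℝ) * ((n : ℝ) * (cA * (sqn C * (B / r)))) := by
  classical
  -- notation
  set P : Matrix (Fin n) (Fin n) ℝ := detFilt A Q C R z T k with hP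
  set E : ℕ → Matrix (Fin n) (Fin n) ℝ :=
    fun t => VV A Q C R z T (t + 1) k * KK A Q C R z T t * C with hE
  set sQ : ℝ := ∑ t ∈ Finset.range k, sqn (VV A Q C R z T (t + 1) k * hQ.sqrt) with hsQ
  set sK : ℝ := ∑ t ∈ Finset.range k, sqn (VV A Q C R z T (t + 1) k * KK A Q C R z T t)
    with hsK
  set sE : ℝ := ∑ t ∈ Finset.range k, sqn (E t) with hsE
  -- trace decomposition
  have hform := detFilt_formula (A := A) (C := C) (z := z) hQ hR hT k
  have htr : (∑ t ∈ Finset.range k,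
        ((VV A Q C R z T (t + 1) k * Q * (VV A Q C R z T (t + 1) k)ᵀ).trace
          + (VV A Q C R z T (t + 1) k * (KK A Q C R z T t * R * (KK A Q C R z T t)ᵀ)
              * (VV A Q C R z T (t + 1) k)ᵀ).trace)) ≤ P.trace := by
    rw [hP, hform]
    rw [Matrix.trace_add, Matrix.trace_sum]
    have h0 : 0 ≤ (VV A Q C R z T 0 k * T * (VV A Q C R z T 0 k)ᵀ).trace :=
      trace_nonneg_of_psd (psd_conj hT _)
    have hterm : ∀ t ∈ Finset.range k,
        (VV A Q C R z T (t + 1) k * Q * (VV A Q C R z T (t + 1) k)ᵀ).trace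
          + (VV A Q C R z T (t + 1) k * (KK A Q C R z T t * R * (KK A Q C R z T t)ᵀ)
              * (VV A Q C R z T (t + 1) k)ᵀ).trace
        = (VV A Q C R z T (t + 1) k * (Q + KK A Q C R z T t * R * (KK A Q C R z T t)ᵀ)
            * (VV A Q C R z T (t + 1) k)ᵀ).trace := by
      intro t _
      rw [Matrix.mul_add, Matrix.add_mul, Matrix.trace_add]
    rw [Finset.sum_congr rfl hterm]
    linarith
  have hQterm : ∀ t, (VV A Q C R z T (t + 1) k * Q * (VV A Q C R z T (t + 1) k)ᵀ).trace
      = sqn (VV A Q C R z T (t + 1) k * hQ.sqrt) := fun t => trace_conj_Q hQ _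
  have hKterm : ∀ t, r * sqn (VV A Q C R z T (t + 1) k * KK A Q C R z T t)
      ≤ (VV A Q C R z T (t + 1) k * (KK A Q C R z T t * R * (KK A Q C R z T t)ᵀ)
          * (VV A Q C R z T (t + 1) k)ᵀ).trace := by
    intro t
    have heq : VV A Q C R z T (t + 1) k * (KK A Q C R z T t * R * (KK A Q C R z T t)ᵀ)
          * (VV A Q C R z T (t + 1) k)ᵀ
        = (VV A Q C R z T (t + 1) k * KK A Q C R z T t) * R
          * (VV A Q C R z T (t + 1) k * KK A Q C R z T t)ᵀ := by
      rw [Matrix.transpose_mul]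
      simp only [Matrix.mul_assoc]
    rw [heq, sqn_eq_trace]
    exact trace_conj_ge hRr _
  -- the two partial-sum bounds
  have hQsum : sQ ≤ B := by
    rw [hsQ]
    have h1 : ∀ t ∈ Finset.range k, sqn (VV A Q C R z T (t + 1) k * hQ.sqrt)
        ≤ sqn (VV A Q C R z T (t + 1) k * hQ.sqrt)
          + (VV A Q C R z T (t + 1) k * (KK A Q C R z T t * R * (KK A Q C R z T t)ᵀ)
              * (VV A Q C R z T (t + 1) k)ᵀ).trace := by
      intro t _
      have h2 : 0 ≤ r * sqn (VV A Q C R z T (t + 1) k * KK A Q C R z T t) :=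
        mul_nonneg hr.le (sqn_nonneg _)
      have h3 := hKterm t
      linarith
    calc (∑ t ∈ Finset.range k, sqn (VV A Q C R z T (t + 1) k * hQ.sqrt))
        ≤ ∑ t ∈ Finset.range k,
            (sqn (VV A Q C R z T (t + 1) k * hQ.sqrt)
              + (VV A Q C R z T (t + 1) k * (KK A Q C R z T t * R * (KK A Q C R z T t)ᵀ)
                  * (VV A Q C R z T (t + 1) k)ᵀ).trace) := Finset.sum_le_sum h1
      _ ≤ P.trace := by
          refine le_trans (le_of_eq ?_) htr
          exact Finset.sum_congr rfl fun t _ => by rw [hQterm t]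
      _ ≤ B := hB
  have hKsum : sK ≤ B / r := by
    rw [le_div_iff₀ hr]
    have h1 : r * sK ≤ P.trace := by
      rw [hsK, Finset.mul_sum]
      calc (∑ t ∈ Finset.range k, r * sqn (VV A Q C R z T (t + 1) k * KK A Q C R z T t))
          ≤ ∑ t ∈ Finset.range k,
              ((VV A Q C R z T (t + 1) k * Q * (VV A Q C R z T (t + 1) k)ᵀ).trace
                + (VV A Q C R z T (t + 1) k * (KK A Q C R z T t * R * (KK A Q C R z T t)ᵀ)
                    * (VV A Q C R z T (t + 1) k)ᵀ).trace) := by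
            apply Finset.sum_le_sum
            intro t _
            have h2 := hKterm t
            have h3 : 0 ≤ (VV A Q C R z T (t + 1) k * Q * (VV A Q C R z T (t + 1) k)ᵀ).trace :=
              trace_nonneg_of_psd (psd_conj hQ _)
            linarith
        _ ≤ P.trace := htr
    rw [mul_comm r sK] at h1
    linarith
  have hEsum : sE ≤ sqn C * (B / r) := by
    rw [hsE]
    calc (∑ t ∈ Finset.range k, sqn (E t))
        ≤ ∑ t ∈ Finset.range k, sqn (VV A Q C R z T (t + 1) k * KK A Q C R z T t) * sqn C := by
          apply Finset.sum_le_sum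
          intro t _
          rw [hE]
          exact sqn_mul_le _ _
      _ = sK * sqn C := by rw [hsK, Finset.sum_mul]
      _ ≤ (B / r) * sqn C := by
          apply mul_le_mul_of_nonneg_right hKsum (sqn_nonneg C)
      _ = sqn C * (B / r) := by ring
  have hsE0 : 0 ≤ sE := by
    rw [hsE]
    exact Finset.sum_nonneg fun t _ => sqn_nonneg _
  -- per-direction bound
  have hi : ∀ i, i < n → sqn (VV A Q C R z T n k * A ^ i * hQ.sqrt)
      ≤ 2 * sqn (VV A Q C R z T (n - i) k * hQ.sqrt) + 2 * ((n : ℝ) * (cA * sE)) := by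
    intro i hin
    have hunroll := VV_unroll_A (A := A) (C := C) (R := R) (z := z) (T := T) hQ i (n - i) k (by omega)
    rw [show n - i + i = n from by omega] at hunroll
    have hre : VV A Q C R z T n k * A ^ i
        = VV A Q C R z T (n - i) k
          + ∑ l ∈ Finset.range i,
              VV A Q C R z T (n - i + l + 1) k * KK A Q C R z T (n - i + l) * C * A ^ l := by
      rw [hunroll]; abel
    have hms : VV A Q C R z T n k * A ^ i * hQ.sqrt
        = VV A Q C R z T (n - i) k * hQ.sqrt
          + ∑ l ∈ Finset.range i, E (n - i + l) * (A ^ l * hQ.sqrt) := by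
      rw [hre, Matrix.add_mul, Finset.sum_mul]
      congr 1
      refine Finset.sum_congr rfl fun l _ => ?_
      rw [hE]
      simp only [Matrix.mul_assoc]
    rw [hms]
    have h1 := sqn_add_le (VV A Q C R z T (n - i) k * hQ.sqrt)
      (∑ l ∈ Finset.range i, E (n - i + l) * (A ^ l * hQ.sqrt))
    have h2 : sqn (∑ l ∈ Finset.range i, E (n - i + l) * (A ^ l * hQ.sqrt))
        ≤ (i : ℝ) * ∑ l ∈ Finset.range i, sqn (E (n - i + l) * (A ^ l * hQ.sqrt)) := by
      simpa using sqn_sum_le (Finset.range i) (fun l => E (n - i + l) * (A ^ l * hQ.sqrt))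
    have h3 : ∑ l ∈ Finset.range i, sqn (E (n - i + l) * (A ^ l * hQ.sqrt))
        ≤ cA * ∑ l ∈ Finset.range i, sqn (E (n - i + l)) := by
      rw [Finset.mul_sum]
      refine Finset.sum_le_sum fun l hl => ?_
      have hln : l < n := lt_of_lt_of_le (Finset.mem_range.mp hl) hin.le
      calc sqn (E (n - i + l) * (A ^ l * hQ.sqrt))
          ≤ sqn (E (n - i + l)) * sqn (A ^ l * hQ.sqrt) := sqn_mul_le _ _
        _ ≤ sqn (E (n - i + l)) * cA :=
            mul_le_mul_of_nonneg_left (hcA l hln) (sqn_nonneg _)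
        _ = cA * sqn (E (n - i + l)) := mul_comm _ _
    have h4 : ∑ l ∈ Finset.range i, sqn (E (n - i + l)) ≤ sE := by
      rw [hsE]
      exact sum_shift_le (fun t => sqn (E t)) (fun t => sqn_nonneg _) (by omega)
    have c1 : sqn (∑ l ∈ Finset.range i, E (n - i + l) * (A ^ l * hQ.sqrt))
        ≤ (n : ℝ) * (cA * sE) := by
      have e1 : ∑ l ∈ Finset.range i, sqn (E (n - i + l) * (A ^ l * hQ.sqrt)) ≤ cA * sE :=
        h3.trans (mul_le_mul_of_nonneg_left h4 hcA0)
      have e2 : (i : ℝ) * ∑ l ∈ Finset.range i, sqn (E (n - i + l) * (A ^ l * hQ.sqrt))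
          ≤ (i : ℝ) * (cA * sE) := mul_le_mul_of_nonneg_left e1 (Nat.cast_nonneg i)
      have e3 : (i : ℝ) * (cA * sE) ≤ (n : ℝ) * (cA * sE) :=
        mul_le_mul_of_nonneg_right (Nat.cast_le.mpr hin.le) (mul_nonneg hcA0 hsE0)
      linarith
    linarith
  -- controllability step
  have hstart : α * sqn (VV A Q C R z T n k)
      ≤ ∑ i ∈ Finset.range n, sqn (VV A Q C R z T n k * A ^ i * hQ.sqrt) := by
    have hconj := trace_conj_ge hW (VV A Q C R z T n k)
    rw [← sqn_eq_trace] at hconj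
    have hWexp : (VV A Q C R z T n k * (∑ i ∈ Finset.range n, A ^ i * Q * (A ^ i)ᵀ)
          * (VV A Q C R z T n k)ᵀ).trace
        = ∑ i ∈ Finset.range n, sqn (VV A Q C R z T n k * A ^ i * hQ.sqrt) := by
      rw [Finset.mul_sum, Finset.sum_mul, Matrix.trace_sum]
      refine Finset.sum_congr rfl fun i _ => ?_
      have hassoc : VV A Q C R z T n k * (A ^ i * Q * (A ^ i)ᵀ) * (VV A Q C R z T n k)ᵀ
          = (VV A Q C R z T n k * A ^ i) * Q * (VV A Q C R z T n k * A ^ i)ᵀ := by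
        rw [Matrix.transpose_mul]
        simp only [Matrix.mul_assoc]
      rw [hassoc, trace_conj_Q hQ]
    rw [hWexp] at hconj
    exact hconj
  have hsum2 : ∑ i ∈ Finset.range n, sqn (VV A Q C R z T n k * A ^ i * hQ.sqrt)
      ≤ 2 * (∑ i ∈ Finset.range n, sqn (VV A Q C R z T (n - i) k * hQ.sqrt))
        + (n : ℝ) * (2 * ((n : ℝ) * (cA * sE))) := by
    calc ∑ i ∈ Finset.range n, sqn (VV A Q C R z T n k * A ^ i * hQ.sqrt)
        ≤ ∑ i ∈ Finset.range n, (2 * sqn (VV A Q C R z T (n - i) k * hQ.sqrt)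
            + 2 * ((n : ℝ) * (cA * sE))) :=
          Finset.sum_le_sum fun i hi' => hi i (Finset.mem_range.mp hi')
      _ = 2 * (∑ i ∈ Finset.range n, sqn (VV A Q C R z T (n - i) k * hQ.sqrt))
            + (n : ℝ) * (2 * ((n : ℝ) * (cA * sE))) := by
          rw [Finset.sum_add_distrib, Finset.sum_const, Finset.card_range, ← Finset.mul_sum,
            nsmul_eq_mul]
  have hreflect : ∑ i ∈ Finset.range n, sqn (VV A Q C R z T (n - i) k * hQ.sqrt) ≤ sQ := by
    have heq : ∑ i ∈ Finset.range n, sqn (VV A Q C R z T (n - i) k * hQ.sqrt)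
        = ∑ j ∈ Finset.range n, sqn (VV A Q C R z T (j + 1) k * hQ.sqrt) := by
      rw [← Finset.sum_range_reflect (fun j => sqn (VV A Q C R z T (j + 1) k * hQ.sqrt)) n]
      refine Finset.sum_congr rfl fun i hi' => ?_
      have hin : i < n := Finset.mem_range.mp hi'
      rw [show n - 1 - i + 1 = n - i from by omega]
    rw [heq, hsQ]
    refine Finset.sum_le_sum_of_subset_of_nonneg ?_ fun t _ _ => sqn_nonneg _
    exact Finset.range_subset_range.mpr hk
  have h2' : (2 * (n : ℝ) * (n : ℝ) * cA) * sE ≤ (2 * (n : ℝ) * (n : ℝ) * cA) * (sqn C * (B / r)) :=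
    mul_le_mul_of_nonneg_left hEsum (by positivity)
  nlinarith [hstart, hsum2, hreflect, hQsum, h2']

/-- The controllability Gramian is positive definite. -/
lemma gramian_posdef (hQ : Q.PosSemidef) (hCtrb : (ctrbMat A hQ.sqrt).rank = n) :
    (∑ i ∈ Finset.range n, A ^ i * Q * (A ^ i)ᵀ).PosDef := by
  have hsqt : hQ.sqrtᵀ = hQ.sqrt := transpose_of_herm hQ.posSemidef_sqrt.1
  have hW : (∑ i ∈ Finset.range n, A ^ i * Q * (A ^ i)ᵀ)
      = ctrbMat A hQ.sqrt * (ctrbMat A hQ.sqrt)ᵀ := by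
    ext i i'
    rw [Matrix.sum_apply, Matrix.mul_apply]
    rw [← Fin.sum_univ_eq_sum_range
      (fun t => (A ^ t * Q * (A ^ t)ᵀ) i i')]
    rw [Fintype.sum_prod_type]
    refine Finset.sum_congr rfl fun j _ => ?_
    have hterm : A ^ (j : ℕ) * Q * (A ^ (j : ℕ))ᵀ
        = (A ^ (j : ℕ) * hQ.sqrt) * (A ^ (j : ℕ) * hQ.sqrt)ᵀ := by
      rw [Matrix.transpose_mul, hsqt, ← Matrix.mul_assoc,
        Matrix.mul_assoc (A ^ (j : ℕ)) hQ.sqrt hQ.sqrt, hQ.sqrt_mul_self]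
    rw [hterm, Matrix.mul_apply]
    refine Finset.sum_congr rfl fun l _ => ?_
    simp [ctrbMat, Matrix.transpose_apply]
  rw [hW]
  exact posdef_self_mul_transpose hCtrb

section Final

variable (hn : 0 < n) (hm : 0 < m)

/-- Hard direction: boundedness propagates from the smaller to the larger initial condition. -/
lemma bounded_up (hn : 0 < n) (hm : 0 < m) (hQ : Q.PosSemidef)
    (hCtrb : (ctrbMat A hQ.sqrt).rank = n) (hR : R.PosDef) (hT : T.PosSemidef)
    {S : Matrix (Fin n) (Fin n) ℝ} (hS : S.PosSemidef) (hTS : (S - T).PosSemidef)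
    (hbdd : atTop.limsup (fun k => ((detFilt A Q C R z T k).trace : EReal)) < ⊤) :
    atTop.limsup (fun k => ((detFilt A Q C R z S k).trace : EReal)) < ⊤ := by
  classical
  -- constants
  obtain ⟨α, hα, hWα⟩ := posdef_exists_sub_smul_one hn (gramian_posdef hQ hCtrb)
  obtain ⟨r, hr, hRr⟩ := posdef_exists_sub_smul_one hm hR
  set cA : ℝ := ∑ l ∈ Finset.range n, sqn (A ^ l * hQ.sqrt) with hcAdef
  have hcA0 : 0 ≤ cA := Finset.sum_nonneg fun l _ => sqn_nonneg _
  have hcA : ∀ l, l < n → sqn (A ^ l * hQ.sqrt) ≤ cA := fun l hl =>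
    Finset.single_le_sum (f := fun l => sqn (A ^ l * hQ.sqrt))
      (fun t _ => sqn_nonneg _) (Finset.mem_range.mpr hl)
  -- extract a real eventual bound from the limsup hypothesis
  obtain ⟨c, hc1, hc2⟩ := exists_between hbdd
  have hev : ∀ᶠ k in atTop, ((detFilt A Q C R z T k).trace : EReal) < c :=
    Filter.eventually_lt_of_limsup_lt hc1
  obtain ⟨k₀, hk₀⟩ := hev.exists
  have hcbot : c ≠ ⊥ := fun hbot => by rw [hbot] at hk₀; exact (not_lt_bot hk₀)
  set B : ℝ := c.toReal with hBdef
  have hcoe : (B : EReal) = c := EReal.coe_toReal hc2.ne hcbot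
  have hevB : ∀ᶠ k in atTop, (detFilt A Q C R z T k).trace ≤ B := by
    filter_upwards [hev] with k hk
    rw [← hcoe] at hk
    exact (EReal.coe_lt_coe_iff.mp hk).le
  -- eventual bound for the S-trajectory
  have hST0 : 0 ≤ (S - T).trace := trace_nonneg_of_psd hTS
  set v0 : ℝ := sqn (VV A Q C R z T 0 n) with hv0def
  have hv00 : 0 ≤ v0 := sqn_nonneg _
  set M : ℝ := (2 * B + 2 * (n : ℝ) * ((n : ℝ) * (cA * (sqn C * (B / r))))) / α with hMdef
  set B' : ℝ := B + (S - T).trace * (M * v0) with hB'def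
  have hevB' : ∀ᶠ k in atTop, (detFilt A Q C R z S k).trace ≤ B' := by
    filter_upwards [hevB, Filter.eventually_ge_atTop n] with k hBk hnk
    -- trace comparison
    have hcomp := (detFilt_compare (A := A) (C := C) (z := z) hQ hR hT hS hTS k).2
    have htr1 : (detFilt A Q C R z S k).trace - (detFilt A Q C R z T k).trace
        ≤ (VV A Q C R z T 0 k * (S - T) * (VV A Q C R z T 0 k)ᵀ).trace := by
      have := trace_mono_of_psd hcomp
      rw [Matrix.trace_sub] at this
      linarith
    have htr2 : (VV A Q C R z T 0 k * (S - T) * (VV A Q C R z T 0 k)ᵀ).trace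
        ≤ (S - T).trace * sqn (VV A Q C R z T 0 k) := by
      rw [sqn_eq_trace]
      exact trace_conj_le hTS _
    -- product bound
    have hsplit : VV A Q C R z T 0 k = VV A Q C R z T n k * VV A Q C R z T 0 n :=
      (VV_comp A Q C R z T (Nat.zero_le n) hnk).symm
    have hVn : sqn (VV A Q C R z T n k) ≤ M := by
      rw [hMdef, le_div_iff₀ hα]
      have := sqn_VV_bound (A := A) (C := C) (z := z) (T := T) hQ hR hT hα hr hcA0 hWα hRr
        hcA hnk hBk
      linarith [this]
    have hV0k : sqn (VV A Q C R z T 0 k) ≤ M * v0 := by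
      rw [hsplit]
      calc sqn (VV A Q C R z T n k * VV A Q C R z T 0 n)
          ≤ sqn (VV A Q C R z T n k) * v0 := sqn_mul_le _ _
        _ ≤ M * v0 := mul_le_mul_of_nonneg_right hVn hv00
    have hfin : (detFilt A Q C R z S k).trace
        ≤ (detFilt A Q C R z T k).trace + (S - T).trace * (M * v0) := by
      have h3 : (S - T).trace * sqn (VV A Q C R z T 0 k) ≤ (S - T).trace * (M * v0) :=
        mul_le_mul_of_nonneg_left hV0k hST0
      linarith
    rw [hB'def]
    linarith
  -- conclude
  have hlimsup : atTop.limsup (fun k => ((detFilt A Q C R z S k).trace : EReal)) ≤ (B' : EReal) := by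
    refine Filter.limsup_le_of_le (by isBoundedDefault) ?_
    filter_upwards [hevB'] with k hk
    exact EReal.coe_le_coe_iff.mpr hk
  exact lt_of_le_of_lt hlimsup (EReal.coe_lt_top B')

/-- Easy direction: boundedness propagates down by monotonicity. -/
lemma bounded_down (hQ : Q.PosSemidef) (hR : R.PosDef) (hT : T.PosSemidef)
    {S : Matrix (Fin n) (Fin n) ℝ} (hS : S.PosSemidef) (hTS : (S - T).PosSemidef)
    (hbdd : atTop.limsup (fun k => ((detFilt A Q C R z S k).trace : EReal)) < ⊤) :
    atTop.limsup (fun k => ((detFilt A Q C R z T k).trace : EReal)) < ⊤ := by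
  refine lt_of_le_of_lt (Filter.limsup_le_limsup ?_) hbdd
  apply Filter.Eventually.of_forall
  intro k
  have := trace_mono_of_psd (detFilt_compare (A := A) (C := C) (z := z) hQ hR hT hS hTS k).1
  exact EReal.coe_le_coe_iff.mpr this

end Final

end RiccatiAux

/-- Whether `limsup Tr(Pₖ) < ∞` for the deterministic Riccati recursion does not depend on
the (positive semidefinite) initial condition. -/
theorem limsup_trace_bounded_indep_init
    {n m : ℕ} (hn : 0 < n) (hm : 0 < m)
    (A : Matrix (Fin n) (Fin n) ℝ) (hA : IsUnit A.det)
    (C : Matrix (Fin m) (Fin n) ℝ) (hObs : (obsMat C A n).rank = n)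
    (Q : Matrix (Fin n) (Fin n) ℝ) (hQ : Q.PosSemidef)
    (hCtrb : (ctrbMat A ((hQ.1.eigenvectorUnitary : Matrix (Fin n) (Fin n) ℝ) *
      diagonal ((RCLike.ofReal : ℝ → ℝ) ∘ Real.sqrt ∘ hQ.1.eigenvalues) *
      star (hQ.1.eigenvectorUnitary : Matrix (Fin n) (Fin n) ℝ))).rank = n)
    (R : Matrix (Fin m) (Fin m) ℝ) (hR : R.PosDef)
    (z : ℕ → Bool)
    (S1 S2 : Matrix (Fin n) (Fin n) ℝ) (hS1 : S1.PosSemidef) (hS2 : S2.PosSemidef) :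
    atTop.limsup (fun k => ((detFilt A Q C R z S1 k).trace : EReal)) < ⊤ ↔
      atTop.limsup (fun k => ((detFilt A Q C R z S2 k).trace : EReal)) < ⊤ := by
  have h12 : (S1 + S2 - S1).PosSemidef := by simpa using hS2
  have h21 : (S1 + S2 - S2).PosSemidef := by simpa using hS1
  have hS12 : (S1 + S2).PosSemidef := hS1.add hS2
  constructor
  · intro h1
    have h3 := RiccatiAux.bounded_up (A := A) (C := C) (z := z) hn hm hQ hCtrb hR hS1 hS12 h12 h1
    exact RiccatiAux.bounded_down (A := A) (C := C) (z := z) hQ hR hS2 hS12 h21 h3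
  · intro h2
    have h3 := RiccatiAux.bounded_up (A := A) (C := C) (z := z) hn hm hQ hCtrb hR hS2 hS12 h21 h2
    exact RiccatiAux.bounded_down (A := A) (C := C) (z := z) hQ hR hS1 hS12 h12 h3
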